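/- Let C be a connected subcomplex of a genus g triangulation T whose complementary dual D is connected, and let e be a merge edge of C. Then e is non-separating (its dual e* is not a bridge of D), and the merge operation at e — doubling e into two parallel edges delimiting a face of degree 2, and adding this face and the two copies of e to C — leaves D connected, decreases the number of boundary faces of C by 1, decreases the Euler characteristic χ(C) by 1, decreases the Euler characteristic of the map associated with C by 2, and increases the genus of the map associated with C by 1. -/

import Mathlib

set_option linter.unusedSectionVars false

/- ----------------------------------------------------------------
   A formalization of (topological) maps on closed orientable
   surfaces via combinatorial maps: a finite set of brins
   (half-edges/darts), a permutation `next` giving the clockwise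
   order of the brins around their origin vertex, and a fixed-point
   free involution `opp` exchanging the two brins of each edge.
   Vertices are the orbits of `next`, edges the orbits of `opp`,
   faces the orbits of the facial-walk permutation
   `facePerm = opp ∘ next` (the follower of a brin, then its
   opposite).
   ---------------------------------------------------------------- -/

structure CombMap (D : Type) [Fintype D] [DecidableEq D] where
  next : Equiv.Perm D
  opp  : Equiv.Perm D
  opp_invol : ∀ d, opp (opp d) = d
  opp_ne : ∀ d, opp d ≠ d

namespace CombMap

variable {D : Type} [Fintype D] [DecidableEq D]

/-- the facial-walk permutation: `b_{i+1}` is the opposite of the follower of `b_i` -/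
def facePerm (M : CombMap D) : Equiv.Perm D := M.next.trans M.opp

/-- forward orbit of a dart under a function -/
def forb (f : D → D) (d : D) : Set D := {h | ∃ n : ℕ, f^[n] d = h}

/-- number of orbits of `f` met by the (f-invariant) set `s` -/
noncomputable def numOrbitsIn (f : D → D) (s : Set D) : ℕ :=
  ((fun d => forb f d) '' s).ncard

noncomputable def numVertices (M : CombMap D) : ℕ := numOrbitsIn (⇑M.next) Set.univ
noncomputable def numEdges (M : CombMap D) : ℕ := numOrbitsIn (⇑M.opp) Set.univ
noncomputable def numFaces (M : CombMap D) : ℕ := numOrbitsIn (⇑M.facePerm) Set.univ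

noncomputable def eulerChar (M : CombMap D) : ℤ :=
  (numVertices M : ℤ) - (numEdges M : ℤ) + (numFaces M : ℤ)

/-- the genus `g` of the surface on which `M` is embedded: Euler's relation `2 - 2g = |V|-|E|+|F|` -/
def HasGenus (M : CombMap D) (g : ℕ) : Prop := M.eulerChar = 2 - 2 * (g : ℤ)

def Connected (M : CombMap D) : Prop :=
  ∀ d d' : D, Relation.ReflTransGen (fun a b => b = M.next a ∨ b = M.opp a) d d'

/-- the two darts have the same origin vertex -/
def sameVertex (M : CombMap D) (d d' : D) : Prop := d' ∈ forb (⇑M.next) d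

def NoLoops (M : CombMap D) : Prop := ∀ d, ¬ M.sameVertex d (M.opp d)

def NoMultipleEdges (M : CombMap D) : Prop :=
  ∀ d d', M.sameVertex d d' → M.sameVertex (M.opp d) (M.opp d') → d' = d ∨ d' = M.opp d

/-- a triangulation of genus `g`: a connected simple map, all of whose faces have degree 3 -/
structure IsTriang (M : CombMap D) (g : ℕ) : Prop where
  conn : M.Connected
  noLoops : M.NoLoops
  noMult : M.NoMultipleEdges
  deg3 : ∀ d, (⇑M.facePerm)^[3] d = d ∧ M.facePerm d ≠ d
  genus : M.HasGenus g

/- root face: marked by a dart `r`; the root face is the facial orbit of `r`,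
   and the root vertices are `v_i = origin of facePerm^[i] r`, `i = 0,1,2`. -/

def rootDarts (M : CombMap D) (r : D) : Set D := forb (⇑M.facePerm) r

/-- the dart belongs to an edge of the root face (an "outer" edge) -/
def RootEdgeDart (M : CombMap D) (r : D) (h : D) : Prop :=
  h ∈ rootDarts M r ∨ M.opp h ∈ rootDarts M r

/-- the dart belongs to an inner edge -/
def InnerDart (M : CombMap D) (r : D) (h : D) : Prop := ¬ RootEdgeDart M r h

/-- a dart whose origin is the root vertex `v_i` -/
def vDart (M : CombMap D) (r : D) (i : ℕ) : D := (⇑M.facePerm)^[i] r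

/-- `v` (as a dart) is an inner vertex, i.e. not a vertex of the root face -/
def InnerVertex (M : CombMap D) (r : D) (v : D) : Prop :=
  ∀ h ∈ rootDarts M r, ¬ M.sameVertex h v

/- ------------------- subcomplexes ------------------- -/

/-- A subcomplex `C = (V',E',F')` of `M`, encoded by the sets of darts of its
vertices, edges and faces: `Vs` is `next`-closed (a union of vertex orbits),
`Es` is `opp`-closed, `Fs` is `facePerm`-closed, the edges of any chosen face
belong to `C`, and the endpoints of any chosen edge belong to `C`. -/
structure Subcomplex (M : CombMap D) where
  Vs : Set D
  Es : Set D
  Fs : Set D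
  vs_closed : ∀ d ∈ Vs, M.next d ∈ Vs
  es_closed : ∀ d ∈ Es, M.opp d ∈ Es
  fs_closed : ∀ d ∈ Fs, M.facePerm d ∈ Fs
  face_edges : ∀ d ∈ Fs, d ∈ Es
  edge_verts : ∀ d ∈ Es, d ∈ Vs

noncomputable def Subcomplex.eulerChar {M : CombMap D} (C : Subcomplex M) : ℤ :=
  (numOrbitsIn (⇑M.next) C.Vs : ℤ) - (numOrbitsIn (⇑M.opp) C.Es : ℤ)
    + (numOrbitsIn (⇑M.facePerm) C.Fs : ℤ)

/-- first-return time (≥ 1) of the iteration of `f` into `s` -/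
noncomputable def returnSteps (f : Equiv.Perm D) (s : Set D) (d : D) : ℕ :=
  sInf {k | 0 < k ∧ (⇑f)^[k] d ∈ s}

/-- first-return map of `f` into `s`: the follower of `d` within `s` -/
noncomputable def firstReturn (f : Equiv.Perm D) (s : Set D) (d : D) : D :=
  (⇑f)^[returnSteps f s d] d

/-- in the map induced on a set `E2` of darts (rotations given by first return of `next`),
the facial-walk successor: follower within `E2`, then opposite -/
noncomputable def gwalk (M : CombMap D) (E2 : Set D) (d : D) : D :=
  M.opp (firstReturn M.next E2 d)

/-- number of facial walks of the subgraph spanned by the darts `E2` -/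
noncomputable def graphFaces (M : CombMap D) (E2 : Set D) : ℕ :=
  numOrbitsIn (gwalk M E2) E2

def graphFaceOrbits (M : CombMap D) (E2 : Set D) : Set (Set D) :=
  {s | ∃ d ∈ E2, s = forb (gwalk M E2) d}

/-- the facial-walk successor on the boundary of a subcomplex -/
noncomputable def Subcomplex.bwalk {M : CombMap D} (C : Subcomplex M) : D → D :=
  gwalk M C.Es

/-- a boundary brin: a brin of `C` lying on a facial walk of `C` which does not
bound a face of `C` (for `Fs` a union of full face orbits these are the brins
of `Es \ Fs`); it is identified with the boundary corner it starts -/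
def Subcomplex.BoundaryBrin {M : CombMap D} (C : Subcomplex M) (d : D) : Prop :=
  d ∈ C.Es ∧ d ∉ C.Fs

/-- number of boundary faces of `C` (one disk attached to each boundary walk) -/
noncomputable def Subcomplex.numBoundaryFaces {M : CombMap D} (C : Subcomplex M) : ℕ :=
  numOrbitsIn C.bwalk (C.Es \ C.Fs)

/-- Euler characteristic of the map associated with `C` (disks attached) -/
noncomputable def Subcomplex.assocEulerChar {M : CombMap D} (C : Subcomplex M) : ℤ :=
  C.eulerChar + (C.numBoundaryFaces : ℤ)

/-- the map associated with `C` has genus `g'` -/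
def Subcomplex.assocHasGenus {M : CombMap D} (C : Subcomplex M) (g' : ℤ) : Prop :=
  C.assocEulerChar = 2 - 2 * g'

/-- the exterior brins incident to the boundary corner at the boundary brin `d`:
the brins of `M \ C` strictly between `d` and its follower within `C`,
in cw order around the origin of `d` -/
def Subcomplex.cornerExterior {M : CombMap D} (C : Subcomplex M) (d : D) : Set D :=
  {g | ∃ j, 0 < j ∧ j < returnSteps M.next C.Es d ∧ g = (⇑M.next)^[j] d}

/-- a chordal edge: an edge of `M \ C` whose two brins are exterior brins
of boundary corners of `C` -/
def Subcomplex.Chordal {M : CombMap D} (C : Subcomplex M) (h : D) : Prop :=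
  h ∉ C.Es ∧ M.opp h ∉ C.Es ∧
  (∃ d, C.BoundaryBrin d ∧ h ∈ C.cornerExterior d) ∧
  (∃ d, C.BoundaryBrin d ∧ M.opp h ∈ C.cornerExterior d)

/-- a free boundary corner: no exterior edge of the corner is chordal -/
def Subcomplex.FreeCorner {M : CombMap D} (C : Subcomplex M) (d : D) : Prop :=
  C.BoundaryBrin d ∧ ∀ g ∈ C.cornerExterior d, ¬ C.Chordal g

/-- connectivity (through vertices and edges of `C`, avoiding the edges of `A`) -/
def Subcomplex.reachAvoiding {M : CombMap D} (C : Subcomplex M) (A : Set D) (a b : D) : Prop :=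
  Relation.ReflTransGen (fun x y =>
    (x ∈ C.Vs ∧ y ∈ C.Vs ∧ M.sameVertex x y) ∨
    (x ∈ C.Es ∧ x ∉ A ∧ M.opp x ∉ A ∧ y = M.opp x)) a b

def Subcomplex.Conn {M : CombMap D} (C : Subcomplex M) : Prop :=
  ∀ a ∈ C.Vs, ∀ b ∈ C.Vs, C.reachAvoiding ∅ a b

/-- a bridge: an edge whose removal disconnects the subcomplex -/
def Subcomplex.Bridge {M : CombMap D} (C : Subcomplex M) (h : D) : Prop :=
  h ∈ C.Es ∧ ¬ (∀ a ∈ C.Vs, ∀ b ∈ C.Vs, C.reachAvoiding {h, M.opp h} a b)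

/-- two boundary corners lie on the same boundary walk (boundary face) of `C` -/
def Subcomplex.SameBoundaryFace {M : CombMap D} (C : Subcomplex M) (a b : D) : Prop :=
  b ∈ forb C.bwalk a ∨ a ∈ forb C.bwalk b

/- ------------------- duality ------------------- -/

/-- the dual map: same darts, vertices of the dual are the faces of `M`
(rotation given by the facial walks), and `opp` unchanged. Under this
encoding the dual brin `h*` of a brin `h` is `h` itself. -/
def dual (M : CombMap D) : CombMap D where
  next := M.facePerm
  opp := M.opp
  opp_invol := M.opp_invol
  opp_ne := M.opp_ne

lemma perm_inv_mem (f : Equiv.Perm D) (s : Set D)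
    (hs : ∀ d ∈ s, f d ∈ s) : ∀ d ∈ s, f.symm d ∈ s := by
  have hiter : ∀ n : ℕ, ∀ d ∈ s, (⇑f)^[n] d ∈ s := by
    intro n
    induction n with
    | zero => intro d hd; simpa using hd
    | succ n ih => intro d hd; rw [Function.iterate_succ_apply]; exact ih _ (hs d hd)
  intro d hd
  have hpos : 0 < orderOf f := orderOf_pos f
  have hfix : (⇑f)^[orderOf f] d = d := by
    rw [← Equiv.Perm.coe_pow, pow_orderOf_eq_one]; rfl
  have h2 : (⇑f)^[orderOf f] d = f ((⇑f)^[orderOf f - 1] d) := by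
    conv_lhs => rw [← Nat.sub_add_cancel hpos]
    rw [Function.iterate_succ_apply']
  have hkey : f.symm d = (⇑f)^[orderOf f - 1] d := by
    apply f.injective
    rw [Equiv.apply_symm_apply, ← h2, hfix]
  rw [hkey]
  exact hiter _ d hd

lemma dual_facePerm (M : CombMap D) (d : D) : (dual M).facePerm d = M.next d := by
  simp [dual, facePerm, Equiv.trans_apply, M.opp_invol]

/-- the complementary dual of a subcomplex `C` of `M`: the subcomplex of the dual
map formed by the vertices dual to unchosen faces, edges dual to unchosen edges,
and faces dual to unchosen vertices -/
def Subcomplex.compDual {M : CombMap D} (C : Subcomplex M) : Subcomplex (dual M) where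
  Vs := C.Fsᶜ
  Es := C.Esᶜ
  Fs := C.Vsᶜ
  vs_closed := by
    intro d hd hmem
    have hmem' : M.facePerm d ∈ C.Fs := hmem
    exact hd (by
      have := perm_inv_mem M.facePerm C.Fs C.fs_closed _ hmem'
      simpa using this)
  es_closed := by
    intro d hd hmem
    have hmem' : M.opp d ∈ C.Es := hmem
    exact hd (by
      have := perm_inv_mem M.opp C.Es C.es_closed _ hmem'
      simpa using this)
  fs_closed := by
    intro d hd hmem
    rw [dual_facePerm] at hmem
    exact hd (by
      have := perm_inv_mem M.next C.Vs C.vs_closed _ hmem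
      simpa using this)
  face_edges := by
    intro d hd hmem
    exact hd (C.edge_verts _ hmem)
  edge_verts := by
    intro d hd hmem
    exact hd (C.face_edges _ hmem)

/- ------------------- complete boundary walks ------------------- -/

open Classical in
/-- the successor along the complete list of brins of a boundary walk
(boundary brins interleaved with the exterior brins of each boundary corner) -/
noncomputable def cwalk (M : CombMap D) (E2 : Set D) (h : D) : D :=
  if M.next h ∈ E2 then M.opp (M.next h) else M.next h

noncomputable def Subcomplex.completeWalk {M : CombMap D} (C : Subcomplex M) : D → D :=
  cwalk M C.Es

/-- brins appearing on some complete boundary walk of `C` -/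
def Subcomplex.walkSupport {M : CombMap D} (C : Subcomplex M) : Set D :=
  {h | ∃ d, C.BoundaryBrin d ∧ h ∈ forb C.completeWalk d}

/-- the complete boundary walks of `C`, as sets of brins -/
def Subcomplex.boundaryOrbits {M : CombMap D} (C : Subcomplex M) : Set (Set D) :=
  {s | ∃ d, C.BoundaryBrin d ∧ s = forb C.completeWalk d}

noncomputable def Subcomplex.walkPeriod {M : CombMap D} (C : Subcomplex M) (d : D) : ℕ :=
  sInf {n | 0 < n ∧ (C.completeWalk)^[n] d = d}

open Classical in
/-- the dual brin map of Lemma `boundary`: `φ(h) = h*` if `h ∈ C`,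
`φ(h) = opposite(h*)` otherwise (recall `h* = h` in our encoding of the dual) -/
noncomputable def dphi (M : CombMap D) (C : Subcomplex M) (h : D) : D :=
  if h ∈ C.Es then h else M.opp h

/-- same edge (as darts) -/
def SameEdgeDart (M : CombMap D) (a b : D) : Prop := b = a ∨ b = M.opp a

/- ------------------- the traversal operations ------------------- -/

/-- the darts of the faces of `M \ C` incident to the boundary corner at `d`,
together with all darts on these faces -/
def Subcomplex.cornerFaceDarts {M : CombMap D} (C : Subcomplex M) (d : D) : Set D :=
  {g | ∃ j, j < returnSteps M.next C.Es d ∧ g ∈ forb (⇑M.facePerm) ((⇑M.next)^[j] d)}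

/-- the operation `conquer(b)` at a free boundary corner `b = d`: add to `C` all
exterior faces incident to `b`, together with their edges and vertices -/
def IsConquer {M : CombMap D} (C : Subcomplex M) (d : D) (C' : Subcomplex M) : Prop :=
  C.FreeCorner d ∧
  C'.Fs = C.Fs ∪ C.cornerFaceDarts d ∧
  C'.Es = C.Es ∪ C.cornerFaceDarts d ∪ (⇑M.opp) '' C.cornerFaceDarts d ∧
  C'.Vs = C.Vs ∪ {g | ∃ h ∈ C'.Es, g ∈ forb (⇑M.next) h}

/-- adding a (split or merge) chordal edge `h` to `C` -/
def IsAddEdge {M : CombMap D} (C : Subcomplex M) (h : D) (C' : Subcomplex M) : Prop :=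
  C'.Fs = C.Fs ∧ C'.Es = C.Es ∪ {h, M.opp h} ∧ C'.Vs = C.Vs

/-- a split edge: a non-separating chordal edge (its dual is not a bridge of the
complementary dual) whose two brins are incident to boundary corners lying in
the same boundary face of `C` -/
def Subcomplex.SplitEdge {M : CombMap D} (C : Subcomplex M) (h : D) : Prop :=
  C.Chordal h ∧ ¬ C.compDual.Bridge h ∧
  ∀ d d', C.BoundaryBrin d → h ∈ C.cornerExterior d →
    C.BoundaryBrin d' → M.opp h ∈ C.cornerExterior d' → C.SameBoundaryFace d d'

/-- a merge edge: a chordal edge whose two brins are incident to boundary corners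
lying in distinct boundary faces of `C` -/
def Subcomplex.MergeEdge {M : CombMap D} (C : Subcomplex M) (h : D) : Prop :=
  C.Chordal h ∧
  ∃ d d', C.BoundaryBrin d ∧ h ∈ C.cornerExterior d ∧
    C.BoundaryBrin d' ∧ M.opp h ∈ C.cornerExterior d' ∧ ¬ C.SameBoundaryFace d d'

/-- the initial subcomplex: the root face together with its edges and vertices -/
def IsRootComplex (M : CombMap D) (r : D) (C : Subcomplex M) : Prop :=
  C.Fs = rootDarts M r ∧
  C.Es = rootDarts M r ∪ (⇑M.opp) '' rootDarts M r ∧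
  C.Vs = {g | ∃ h ∈ C.Es, g ∈ forb (⇑M.next) h}

def IsFull {M : CombMap D} (C : Subcomplex M) : Prop :=
  C.Fs = Set.univ ∧ C.Es = Set.univ ∧ C.Vs = Set.univ

/-- one (uncolored) step of the traversal: a conquest, a split, or a merge -/
def PlainStep (M : CombMap D) (C C' : Subcomplex M) : Prop :=
  (∃ d, IsConquer C d C') ∨ (∃ h, (C.SplitEdge h ∨ C.MergeEdge h) ∧ IsAddEdge C h C')

/-- a subcomplex reachable from the root face by traversal steps -/
def ExecReach (M : CombMap D) (r : D) (C : Subcomplex M) : Prop :=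
  ∃ C0, IsRootComplex M r C0 ∧ Relation.ReflTransGen (PlainStep M) C0 C

/- ------------------- the colorient rule ------------------- -/

/-- the `colorient` rule at the free boundary corner `d` (with `d'` the follower
of `d` within `C`): the edge of `d` is oriented out of the corner vertex with
color 1, the edge of `d'` is oriented outward with color 0, and all exterior
edges of the corner are oriented toward the corner vertex with color 2 (on
non-special inner edges the opposite dart records the same edge seen from the
other endpoint; each dart of a special edge records its own copy). -/
def ColorientEq (M : CombMap D) (r : D) (C : Subcomplex M) (d : D)
    (dir : D → Bool) (col : D → Fin 3) (special : Set D) : Prop :=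
  (InnerDart M r d → dir d = true ∧ col d = 1 ∧
      (d ∉ special → dir (M.opp d) = false ∧ col (M.opp d) = 1)) ∧
  (InnerDart M r (firstReturn M.next C.Es d) →
      dir (firstReturn M.next C.Es d) = true ∧ col (firstReturn M.next C.Es d) = 0 ∧
      (firstReturn M.next C.Es d ∉ special →
        dir (M.opp (firstReturn M.next C.Es d)) = false ∧
        col (M.opp (firstReturn M.next C.Es d)) = 0)) ∧
  (∀ j, 0 < j → j < returnSteps M.next C.Es d → InnerDart M r ((⇑M.next)^[j] d) →
      dir ((⇑M.next)^[j] d) = false ∧ col ((⇑M.next)^[j] d) = 2 ∧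
      dir (M.opp ((⇑M.next)^[j] d)) = true ∧ col (M.opp ((⇑M.next)^[j] d)) = 2)

/-- one step of `ComputeSchnyderAnyGenus`, recording colors and orientations -/
def GStep (M : CombMap D) (r : D) (C C' : Subcomplex M)
    (dir : D → Bool) (col : D → Fin 3) (special : Set D) : Prop :=
  (∃ d, IsConquer C d C' ∧ ColorientEq M r C d dir col special) ∨
  (∃ h ∈ special, (C.SplitEdge h ∨ C.MergeEdge h) ∧ IsAddEdge C h C')

/-- a complete execution of the traversal algorithm `ComputeSchnyderAnyGenus`
on `M` with root face at `r`, producing the orientation `dir`, the coloring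
`col` and the set `special` of darts of the (split/merge) special edges -/
structure GExec (M : CombMap D) (r : D)
    (dir : D → Bool) (col : D → Fin 3) (special : Set D) where
  N : ℕ
  Cs : ℕ → Subcomplex M
  init : IsRootComplex M r (Cs 0)
  final : IsFull (Cs N)
  step : ∀ k < N, GStep M r (Cs k) (Cs (k + 1)) dir col special
  special_opp : ∀ h ∈ special, M.opp h ∈ special
  special_added : ∀ h ∈ special, ∃ k < N, ∃ h',
      ((Cs k).SplitEdge h' ∨ (Cs k).MergeEdge h') ∧ IsAddEdge (Cs k) h' (Cs (k + 1)) ∧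
      (h = h' ∨ h = M.opp h')

/-- an execution of the planar traversal algorithm (conquests only) -/
structure PlanarExec (M : CombMap D) (r : D) (dir : D → Bool) (col : D → Fin 3) where
  N : ℕ
  Cs : ℕ → Subcomplex M
  init : IsRootComplex M r (Cs 0)
  final : IsFull (Cs N)
  step : ∀ k < N, ∃ d, IsConquer (Cs k) d (Cs (k + 1)) ∧
      ColorientEq M r (Cs k) d dir col ∅

/-- a boundary brin of the edge `{v₀,v₁}` (marking the boundary face `f₀`) -/
def RootBoundaryBrin (M : CombMap D) (r : D) (C : Subcomplex M) (d0 : D) : Prop :=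
  C.BoundaryBrin d0 ∧ M.sameVertex (vDart M r 0) d0 ∧ M.sameVertex (vDart M r 1) (M.opp d0)

/-- the implementation of the traversal that always chooses an update-candidate
incident to the boundary face containing `{v₀,v₁}` and gives priority to free
boundary corners over split and merge edges -/
def PriorityRun {M : CombMap D} (r : D) {dir : D → Bool} {col : D → Fin 3}
    {special : Set D} (E : GExec M r dir col special) : Prop :=
  ∀ k < E.N,
    (∀ d, IsConquer (E.Cs k) d (E.Cs (k + 1)) →
        ∃ d0, RootBoundaryBrin M r (E.Cs k) d0 ∧ (E.Cs k).SameBoundaryFace d0 d) ∧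
    (∀ h, ((E.Cs k).SplitEdge h ∨ (E.Cs k).MergeEdge h) →
        IsAddEdge (E.Cs k) h (E.Cs (k + 1)) →
        (¬ ∃ d d0, RootBoundaryBrin M r (E.Cs k) d0 ∧ (E.Cs k).FreeCorner d ∧
            (E.Cs k).SameBoundaryFace d0 d) ∧
        (∃ d d0, RootBoundaryBrin M r (E.Cs k) d0 ∧ (E.Cs k).BoundaryBrin d ∧
            (E.Cs k).SameBoundaryFace d0 d ∧
            (h ∈ (E.Cs k).cornerExterior d ∨ M.opp h ∈ (E.Cs k).cornerExterior d)))

/- ------------------- Schnyder woods ------------------- -/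

/-- the word pattern `Seq(In 1), Out 0, Seq(In 2), Out 1, Seq(In 0)` on values
`(outgoing?, color)` read in ccw order -/
def SchnyderPattern (l : List (Bool × Fin 3)) : Prop :=
  ∃ a b c : ℕ, l = List.replicate a ((false : Bool), (1 : Fin 3)) ++
    [((true : Bool), (0 : Fin 3))] ++ List.replicate b ((false : Bool), (2 : Fin 3)) ++
    [((true : Bool), (1 : Fin 3))] ++ List.replicate c ((false : Bool), (0 : Fin 3))

noncomputable def vdeg (M : CombMap D) (v : D) : ℕ := (forb (⇑M.next) v).ncard

/-- the ccw successor around the origin vertex -/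
noncomputable def ccwSucc (M : CombMap D) : D → D := ⇑M.next.symm

/-- the darts strictly after `s` in ccw order around its origin, one full turn -/
noncomputable def ccwTail (M : CombMap D) (s : D) : List D :=
  (List.range (vdeg M s - 1)).map fun i => (ccwSucc M)^[i + 1] s

open Classical in
/-- the darts of the sector starting right after the delimiter `s` (in ccw order),
up to the next delimiter -/
noncomputable def sectorDarts (M : CombMap D) (P : D → Prop) (s : D) : List D :=
  (ccwTail M s).takeWhile fun g => decide (¬ P g)

noncomputable def nextDelim (M : CombMap D) (P : D → Prop) (s : D) : D :=
  (ccwSucc M)^[(sectorDarts M P s).length + 1] s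

open Classical in
/-- the sequence of values `(outgoing?, color)` of the inner edges of the sector
that follows the delimiter `s` in ccw order around the origin of `s`.  A special
edge is doubled into two copies enclosing a special face: the copy recorded on the
dart `g` itself appears at the end of the sector preceding the special face of `g`,
and the copy recorded on `M.opp g` (seen from the origin of `g`, hence with
direction flipped) appears at the beginning of the sector following it.  When
`excl2 = true` (local condition at an inner vertex), a copy which is the outgoing
edge of color 2 is excluded from its sector. -/
noncomputable def sectorVals (M : CombMap D) (r : D) (special : Set D)
    (dir : D → Bool) (col : D → Fin 3) (P : D → Prop) (excl2 : Bool) (s : D) :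
    List (Bool × Fin 3) :=
  (if s ∈ special ∧ ¬ (excl2 = true ∧ (!(dir (M.opp s)), col (M.opp s)) =
      ((true : Bool), (2 : Fin 3)))
    then [((!(dir (M.opp s))), col (M.opp s))] else []) ++
  ((sectorDarts M P s).filter fun g => decide (InnerDart M r g)).map
      (fun g => (dir g, col g)) ++
  (if nextDelim M P s ∈ special ∧ ¬ (excl2 = true ∧
      (dir (nextDelim M P s), col (nextDelim M P s)) = ((true : Bool), (2 : Fin 3)))
    then [(dir (nextDelim M P s), col (nextDelim M P s))] else [])

/-- delimiters around an inner vertex: the special darts and the outgoing dart of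
color 2 -/
def innerDelim (special : Set D) (dir : D → Bool) (col : D → Fin 3) (g : D) : Prop :=
  g ∈ special ∨ (dir g = true ∧ col g = 2)

/-- delimiters around the root vertex `v_i`: the special darts and the root-face
corner (at the root dart `vDart M r i`) -/
def rootDelim (M : CombMap D) (r : D) (special : Set D) (i : ℕ) (g : D) : Prop :=
  g ∈ special ∨ g = vDart M r i

/-- local condition at an inner vertex `v`: exactly one outgoing edge (occurrence)
of color 2, and every sector (maximal interval avoiding the special faces and this
edge) reads `Seq(In 1), Out 0, Seq(In 2), Out 1, Seq(In 0)` in ccw order -/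
def LocalVertexCond (M : CombMap D) (r : D) (special : Set D)
    (dir : D → Bool) (col : D → Fin 3) (v : D) : Prop :=
  (∃! gc : D × Bool, M.sameVertex v gc.1 ∧
      cond gc.2 (gc.1 ∈ special ∧ dir (M.opp gc.1) = false ∧ col (M.opp gc.1) = 2)
        (dir gc.1 = true ∧ col gc.1 = 2)) ∧
  ∀ s, M.sameVertex v s → innerDelim special dir col s →
    SchnyderPattern (sectorVals M r special dir col (innerDelim special dir col) true s)

/-- root-face condition at `v_i` (`i = 0` or `1`): all inner edges of the root
sector are ingoing of color `i`, and every other sector reads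
`Seq(In 1), Out 0, Seq(In 2), Out 1, Seq(In 0)` in ccw order -/
def RootVertexCond (M : CombMap D) (r : D) (special : Set D)
    (dir : D → Bool) (col : D → Fin 3) (i : Fin 3) : Prop :=
  (∀ p ∈ sectorVals M r special dir col (rootDelim M r special (i : ℕ)) false
      (vDart M r (i : ℕ)), p = ((false : Bool), i)) ∧
  (∀ s, M.sameVertex (vDart M r (i : ℕ)) s → s ∈ special →
      SchnyderPattern (sectorVals M r special dir col
        (rootDelim M r special (i : ℕ)) false s))

/-- a cut-graph: a spanning cellular subgraph with a unique face, i.e. a connected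
spanning subgraph whose complement on the surface is a single open disk -/
def IsCutGraph (M : CombMap D) (gT : ℕ) (E2 : Set D) : Prop :=
  (∀ h ∈ E2, M.opp h ∈ E2) ∧
  (∀ v : D, ∃ h ∈ E2, M.sameVertex v h) ∧
  (∀ a ∈ E2, ∀ b ∈ E2, Relation.ReflTransGen
      (fun x y => x ∈ E2 ∧ y ∈ E2 ∧ (M.sameVertex x y ∨ y = M.opp x)) a b) ∧
  graphFaces M E2 = 1 ∧
  ((M.numVertices : ℤ) - (numOrbitsIn (⇑M.opp) E2 : ℤ)) + 1 = 2 - 2 * (gT : ℤ)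

/-- the darts of the cut-graph `G₂`: the (non-special) edges of color 2, the two
root edges `{v₀,v₂}` and `{v₁,v₂}`, and the special edges (not doubled) -/
def G2darts (M : CombMap D) (r : D) (special : Set D) (col : D → Fin 3) : Set D :=
  {h | InnerDart M r h ∧ h ∉ special ∧ col h = 2} ∪ special ∪
  {h | RootEdgeDart M r h ∧ (M.sameVertex (vDart M r 2) h ∨
      M.sameVertex (vDart M r 2) (M.opp h))}

/-- the edges of color 2 form a tree spanning all vertices except `v₀` and `v₁`,
rooted at `v₂` with all edges directed toward `v₂` -/
def Tree2Cond (M : CombMap D) (r : D) (special : Set D)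
    (dir : D → Bool) (col : D → Fin 3) : Prop :=
  (∀ h, InnerDart M r h → h ∉ special → col h = 2 →
      ¬ M.sameVertex (vDart M r 0) h ∧ ¬ M.sameVertex (vDart M r 1) h) ∧
  (∀ v : D, ¬ M.sameVertex (vDart M r 0) v → ¬ M.sameVertex (vDart M r 1) v →
      ¬ M.sameVertex (vDart M r 2) v →
      ∃! h, M.sameVertex v h ∧ InnerDart M r h ∧ h ∉ special ∧ col h = 2 ∧
        dir h = true) ∧
  (∀ h, M.sameVertex (vDart M r 2) h →
      ¬ (InnerDart M r h ∧ h ∉ special ∧ col h = 2 ∧ dir h = true)) ∧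
  (∀ v : D, ¬ M.sameVertex (vDart M r 0) v → ¬ M.sameVertex (vDart M r 1) v →
      Relation.ReflTransGen (fun a b => ∃ h, M.sameVertex a h ∧ InnerDart M r h ∧
          h ∉ special ∧ col h = 2 ∧ dir h = true ∧ M.sameVertex b (M.opp h))
        v (vDart M r 2))

/-- a `g`-Schnyder wood of a genus-`gT` triangulation with root face at `r`:
the inner edges are partitioned into normal edges and special edges (set of
darts `special`, each special edge carrying two independently directed and
colored copies, recorded on its two darts), every edge is directed and colored
in `{0,1,2}`, subject to the root-face condition, the local condition for inner
vertices and the cut-graph condition -/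
structure IsGSchnyderWood (M : CombMap D) (r : D) (gT : ℕ)
    (special : Set D) (dir : D → Bool) (col : D → Fin 3) : Prop where
  special_opp : ∀ h ∈ special, M.opp h ∈ special
  special_inner : ∀ h ∈ special, InnerDart M r h
  consistent : ∀ h, InnerDart M r h → h ∉ special →
      dir (M.opp h) = !dir h ∧ col (M.opp h) = col h
  v2_nospecial : ∀ g, M.sameVertex (vDart M r 2) g → g ∉ special
  v2_in2 : ∀ g, M.sameVertex (vDart M r 2) g → InnerDart M r g →
      dir g = false ∧ col g = 2
  root0 : RootVertexCond M r special dir col 0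
  root1 : RootVertexCond M r special dir col 1
  local_inner : ∀ v, InnerVertex M r v → LocalVertexCond M r special dir col v
  tree2 : Tree2Cond M r special dir col
  cut : IsCutGraph M gT (G2darts M r special col)

/-- a Schnyder wood of a plane triangulation (Definition of Schnyder): an
orientation and coloring of the inner edges such that all inner edges incident
to `v_i` are ingoing of color `i`, and around each inner vertex the edges read,
in ccw order: `Out 2, Seq(In 1), Out 0, Seq(In 2), Out 1, Seq(In 0)` -/
structure IsPlanarSchnyderWood (M : CombMap D) (r : D)
    (dir : D → Bool) (col : D → Fin 3) : Prop where
  consistent : ∀ h, InnerDart M r h → dir (M.opp h) = !dir h ∧ col (M.opp h) = col h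
  root_cond : ∀ i : Fin 3, ∀ g, M.sameVertex (vDart M r (i : ℕ)) g →
      InnerDart M r g → dir g = false ∧ col g = i
  local_cond : ∀ v, InnerVertex M r v → LocalVertexCond M r ∅ dir col v


section ForbAux

variable {f g : D → D} {s : Set D} {x y z : D}

lemma self_mem_forb (f : D → D) (x : D) : x ∈ forb f x := ⟨0, rfl⟩

lemma iterate_mem_forb (f : D → D) (x : D) (n : ℕ) : f^[n] x ∈ forb f x := ⟨n, rfl⟩

lemma forb_trans (hxy : y ∈ forb f x) (hyz : z ∈ forb f y) : z ∈ forb f x := by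
  obtain ⟨n, rfl⟩ := hxy
  obtain ⟨m, rfl⟩ := hyz
  exact ⟨m + n, Function.iterate_add_apply f m n x⟩

lemma forb_congr (h : ∀ n, f^[n] x = g^[n] x) : forb f x = forb g x := by
  ext y
  constructor
  · rintro ⟨n, rfl⟩; exact ⟨n, (h n).symm⟩
  · rintro ⟨n, rfl⟩; exact ⟨n, h n⟩

lemma iterate_mem_closed (hc : ∀ a ∈ s, f a ∈ s) (hx : x ∈ s) : ∀ n, f^[n] x ∈ s := by
  intro n
  induction n with
  | zero => simpa using hx
  | succ n ih => rw [Function.iterate_succ_apply']; exact hc _ ih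

lemma forb_subset_on (hc : ∀ a ∈ s, f a ∈ s) (hx : x ∈ s) : forb f x ⊆ s := by
  rintro y ⟨n, rfl⟩; exact iterate_mem_closed hc hx n

lemma iterate_injOn (hc : ∀ a ∈ s, f a ∈ s) (hi : Set.InjOn f s) (n : ℕ) :
    ∀ a ∈ s, ∀ b ∈ s, f^[n] a = f^[n] b → a = b := by
  induction n with
  | zero => intro a _ b _ h; simpa using h
  | succ n ih =>
    intro a ha b hb h
    rw [Function.iterate_succ_apply', Function.iterate_succ_apply'] at h
    exact ih a ha b hb (hi (iterate_mem_closed hc ha n) (iterate_mem_closed hc hb n) h)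

lemma exists_period_on (hc : ∀ a ∈ s, f a ∈ s) (hi : Set.InjOn f s) (hx : x ∈ s) :
    ∃ m, 0 < m ∧ f^[m] x = x := by
  have aux : ∀ i j : ℕ, i < j → f^[i] x = f^[j] x → ∃ m, 0 < m ∧ f^[m] x = x := by
    intro i j hij h
    refine ⟨j - i, Nat.sub_pos_of_lt hij, ?_⟩
    have key : f^[i] (f^[j - i] x) = f^[i] x := by
      rw [← Function.iterate_add_apply, Nat.add_sub_cancel' hij.le]
      exact h.symm
    exact iterate_injOn hc hi i _ (iterate_mem_closed hc hx _) x hx key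
  obtain ⟨i, j, hij, h⟩ := Finite.exists_ne_map_eq_of_infinite (fun n : ℕ => f^[n] x)
  rcases lt_or_gt_of_ne hij with h' | h'
  · exact aux i j h' h
  · exact aux j i h' h.symm

lemma iterate_mul_period {m : ℕ} (hm : f^[m] x = x) : ∀ q, f^[m * q] x = x := by
  intro q
  induction q with
  | zero => simp
  | succ q ih => rw [Nat.mul_succ, Function.iterate_add_apply, hm]; exact ih

lemma iterate_eq_mod {m : ℕ} (hm : f^[m] x = x) (n : ℕ) : f^[n] x = f^[n % m] x := by
  conv_lhs => rw [← Nat.mod_add_div n m]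
  rw [Function.iterate_add_apply, iterate_mul_period hm]

lemma mem_forb_symm_on (hc : ∀ a ∈ s, f a ∈ s) (hi : Set.InjOn f s) (hx : x ∈ s)
    (hy : y ∈ forb f x) : x ∈ forb f y := by
  obtain ⟨n, rfl⟩ := hy
  obtain ⟨m, hm0, hm⟩ := exists_period_on hc hi hx
  refine ⟨m * n + m - n, ?_⟩
  rw [← Function.iterate_add_apply]
  have hn : n ≤ m * n + m := le_trans (Nat.le_mul_of_pos_left n hm0) (Nat.le_add_right _ _)
  have harith : m * n + m - n + n = m * (n + 1) := by
    rw [Nat.sub_add_cancel hn, Nat.mul_succ]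
  rw [harith]
  exact iterate_mul_period hm (n + 1)

lemma exists_minimal_period_on (hc : ∀ a ∈ s, f a ∈ s) (hi : Set.InjOn f s) (hx : x ∈ s) :
    ∃ m, 0 < m ∧ f^[m] x = x ∧ ∀ i, 0 < i → i < m → f^[i] x ≠ x := by
  obtain ⟨m0, hm0, hm⟩ := exists_period_on hc hi hx
  have hne : {m | 0 < m ∧ f^[m] x = x}.Nonempty := ⟨m0, Set.mem_setOf.mpr ⟨hm0, hm⟩⟩
  obtain ⟨h1, h2⟩ := Nat.sInf_mem hne
  refine ⟨sInf {m | 0 < m ∧ f^[m] x = x}, h1, h2, ?_⟩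
  intro i h0 hi' hc'
  exact absurd (Nat.sInf_le (Set.mem_setOf.mpr ⟨h0, hc'⟩)) (not_le.mpr hi')

lemma forb_eq_of_mem_on (hc : ∀ a ∈ s, f a ∈ s) (hi : Set.InjOn f s) (hx : x ∈ s)
    (hy : y ∈ forb f x) : forb f y = forb f x := by
  apply Set.Subset.antisymm
  · exact fun z hz => forb_trans hy hz
  · exact fun z hz => forb_trans (mem_forb_symm_on hc hi hx hy) hz

end ForbAux


section ReturnAux

lemma iterate_orderOf (f : Equiv.Perm D) (d : D) : (⇑f)^[orderOf f] d = d := by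
  rw [← Equiv.Perm.coe_pow, pow_orderOf_eq_one]; rfl

lemma returnSteps_spec {f : Equiv.Perm D} {s : Set D} {x : D} (hx : x ∈ s) :
    0 < returnSteps f s x ∧ (⇑f)^[returnSteps f s x] x ∈ s := by
  have hmem : orderOf f ∈ {k | 0 < k ∧ (⇑f)^[k] x ∈ s} :=
    Set.mem_setOf.mpr ⟨orderOf_pos f, by rw [iterate_orderOf]; exact hx⟩
  exact Nat.sInf_mem ⟨orderOf f, hmem⟩

lemma returnSteps_min {f : Equiv.Perm D} {s : Set D} {x : D} {k : ℕ}
    (h0 : 0 < k) (hk : k < returnSteps f s x) : (⇑f)^[k] x ∉ s := by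
  intro hmem
  exact absurd (Nat.sInf_le (Set.mem_setOf.mpr ⟨h0, hmem⟩)) (not_le.mpr hk)

lemma returnSteps_eq {f : Equiv.Perm D} {s : Set D} {x : D} {k : ℕ}
    (h0 : 0 < k) (hk : (⇑f)^[k] x ∈ s)
    (hmin : ∀ i, 0 < i → i < k → (⇑f)^[i] x ∉ s) : returnSteps f s x = k := by
  apply le_antisymm (Nat.sInf_le (Set.mem_setOf.mpr ⟨h0, hk⟩))
  by_contra h
  push_neg at h
  have hne : {k | 0 < k ∧ (⇑f)^[k] x ∈ s}.Nonempty := ⟨k, Set.mem_setOf.mpr ⟨h0, hk⟩⟩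
  obtain ⟨h0', hmem⟩ := Nat.sInf_mem hne
  exact hmin _ h0' h hmem

variable {M : CombMap D}

lemma facePerm_apply (M : CombMap D) (x : D) : M.facePerm x = M.opp (M.next x) := rfl

lemma es_opp_mem (C : Subcomplex M) {x : D} (h : M.opp x ∈ C.Es) : x ∈ C.Es := by
  have := C.es_closed _ h
  rwa [M.opp_invol] at this

lemma es_opp_not_mem (C : Subcomplex M) {x : D} (h : x ∉ C.Es) : M.opp x ∉ C.Es :=
  fun hx => h (es_opp_mem C hx)

lemma fs_subset_es (C : Subcomplex M) : C.Fs ⊆ C.Es := fun x hx => C.face_edges x hx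

lemma fs_of_facePerm (C : Subcomplex M) {x : D} (h : M.facePerm x ∈ C.Fs) : x ∈ C.Fs := by
  have := perm_inv_mem M.facePerm C.Fs C.fs_closed _ h
  simpa using this

lemma bwalk_def (C : Subcomplex M) (x : D) :
    C.bwalk x = M.opp ((⇑M.next)^[returnSteps M.next C.Es x] x) := rfl

lemma bwalk_mem_es (C : Subcomplex M) {x : D} (hx : x ∈ C.Es) : C.bwalk x ∈ C.Es :=
  C.es_closed _ (returnSteps_spec hx).2

lemma bwalk_not_fs (C : Subcomplex M) {x : D} (hx : x ∈ C.Es) (hx' : x ∉ C.Fs) :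
    C.bwalk x ∉ C.Fs := by
  obtain ⟨hpos, hmem⟩ := returnSteps_spec (f := M.next) hx
  rcases eq_or_lt_of_le (Nat.one_le_iff_ne_zero.mpr (Nat.pos_iff_ne_zero.mp hpos)) with h1 | h2
  · have hb : C.bwalk x = M.facePerm x := by
      rw [bwalk_def, ← h1, facePerm_apply]
      simp
    rw [hb]
    exact fun hf => hx' (fs_of_facePerm C hf)
  · intro hf
    set r := returnSteps M.next C.Es x with hr
    have hw : (⇑M.next)^[r - 1] x ∉ C.Es := returnSteps_min (by omega) (by omega)
    have hit : (⇑M.next)^[r] x = M.next ((⇑M.next)^[r - 1] x) := by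
      conv_lhs => rw [show r = (r - 1) + 1 by omega]
      rw [Function.iterate_succ_apply']
    have hface : M.facePerm ((⇑M.next)^[r - 1] x) = C.bwalk x := by
      rw [bwalk_def, facePerm_apply, ← hr, hit]
    have : (⇑M.next)^[r - 1] x ∈ C.Fs := fs_of_facePerm C (by rw [hface]; exact hf)
    exact hw (fs_subset_es C this)

lemma firstReturn_injOn_aux (C : Subcomplex M) {x y : D} (hx : x ∈ C.Es)
    (hle : returnSteps M.next C.Es x ≤ returnSteps M.next C.Es y)
    (h : (⇑M.next)^[returnSteps M.next C.Es x] x = (⇑M.next)^[returnSteps M.next C.Es y] y) :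
    x = y := by
  set rx := returnSteps M.next C.Es x with hrx
  set ry := returnSteps M.next C.Es y with hry
  have hxy : (⇑M.next)^[rx] x = (⇑M.next)^[rx] ((⇑M.next)^[ry - rx] y) := by
    rw [← Function.iterate_add_apply]
    rw [show rx + (ry - rx) = ry by omega]
    exact h
  have hinj : x = (⇑M.next)^[ry - rx] y := (M.next.injective.iterate rx) hxy
  rcases Nat.eq_zero_or_pos (ry - rx) with h0 | h0
  · rw [h0] at hinj; simpa using hinj
  · have hpos : 0 < rx := (returnSteps_spec hx).1
    have hlt : ry - rx < ry := by omega
    exact absurd (hinj ▸ hx) (returnSteps_min h0 hlt)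

lemma bwalk_injOn (C : Subcomplex M) : Set.InjOn C.bwalk C.Es := by
  intro x hx y hy h
  rw [bwalk_def, bwalk_def] at h
  have h2 := M.opp.injective h
  rcases le_total (returnSteps M.next C.Es x) (returnSteps M.next C.Es y) with hle | hle
  · exact firstReturn_injOn_aux C hx hle h2
  · exact (firstReturn_injOn_aux C hy hle h2.symm).symm

lemma corner_unique (C : Subcomplex M) {x y : D} {i j : ℕ} (hx : x ∈ C.Es) (hy : y ∈ C.Es)
    (hi0 : 0 < i) (hi : i < returnSteps M.next C.Es x)
    (hj0 : 0 < j) (hj : j < returnSteps M.next C.Es y)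
    (h : (⇑M.next)^[i] x = (⇑M.next)^[j] y) : x = y ∧ i = j := by
  have aux : ∀ x y : D, ∀ i j : ℕ, x ∈ C.Es → y ∈ C.Es → 0 < i →
      i < returnSteps M.next C.Es x → 0 < j → j < returnSteps M.next C.Es y →
      i ≤ j → (⇑M.next)^[i] x = (⇑M.next)^[j] y → x = y ∧ i = j := by
    intro x y i j hx hy hi0 hi hj0 hj hij h
    have hxy : (⇑M.next)^[i] x = (⇑M.next)^[i] ((⇑M.next)^[j - i] y) := by
      rw [← Function.iterate_add_apply]
      rw [show i + (j - i) = j by omega]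
      exact h
    have hinj : x = (⇑M.next)^[j - i] y := (M.next.injective.iterate i) hxy
    rcases Nat.eq_zero_or_pos (j - i) with h0 | h0
    · have hij' : i = j := by omega
      subst hij'
      rw [h0] at hinj
      simp at hinj
      exact ⟨hinj, rfl⟩
    · have hlt : j - i < returnSteps M.next C.Es y := by omega
      exact absurd (hinj ▸ hx) (returnSteps_min h0 hlt)
  rcases le_total i j with hij | hij
  · exact aux x y i j hx hy hi0 hi hj0 hj hij h
  · obtain ⟨h1, h2⟩ := aux y x j i hy hx hj0 hj hi0 hi hij h.symm
    exact ⟨h1.symm, h2.symm⟩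

lemma cwalk_of_mem {E2 : Set D} {h : D} (hm : M.next h ∈ E2) :
    cwalk M E2 h = M.opp (M.next h) := if_pos hm

lemma cwalk_of_not_mem {E2 : Set D} {h : D} (hm : M.next h ∉ E2) :
    cwalk M E2 h = M.next h := if_neg hm

lemma cwalk_injective {E2 : Set D} (hE : ∀ x ∈ E2, M.opp x ∈ E2) :
    Function.Injective (cwalk M E2) := by
  intro a b hab
  by_cases ha : M.next a ∈ E2 <;> by_cases hb : M.next b ∈ E2
  · rw [cwalk_of_mem ha, cwalk_of_mem hb] at hab
    exact M.next.injective (M.opp.injective hab)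
  · rw [cwalk_of_mem ha, cwalk_of_not_mem hb] at hab
    exact absurd (hab ▸ hE _ ha) hb
  · rw [cwalk_of_not_mem ha, cwalk_of_mem hb] at hab
    exact absurd (hab.symm ▸ hE _ hb) ha
  · rw [cwalk_of_not_mem ha, cwalk_of_not_mem hb] at hab
    exact M.next.injective hab

lemma forb_opp (M : CombMap D) (x : D) : forb (⇑M.opp) x = {x, M.opp x} := by
  ext y
  constructor
  · rintro ⟨n, rfl⟩
    have : ∀ n : ℕ, (⇑M.opp)^[n] x = x ∨ (⇑M.opp)^[n] x = M.opp x := by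
      intro n
      induction n with
      | zero => exact Or.inl rfl
      | succ n ih =>
        rcases ih with h | h <;> rw [Function.iterate_succ_apply', h]
        · exact Or.inr rfl
        · exact Or.inl (M.opp_invol x)
    rcases this n with h | h <;> simp [h]
  · rintro (rfl | rfl)
    · exact ⟨0, rfl⟩
    · exact ⟨1, rfl⟩

end ReturnAux

end CombMap

/- STATEMENT 6: Let C be a connected subcomplex of a genus g triangulation with
connected complementary dual D, and let e be a merge edge of C.  Then e is
non-separating (its dual is not a bridge of D), and the merge operation at e
(doubling e into two parallel edges enclosing a degree-2 face and adding them
to C, modeled here by adding the edge e to C) leaves D connected, decreases the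
number of boundary faces of C by 1, decreases χ(C) by 1, decreases the Euler
characteristic of the associated map by 2, and increases the genus of the
associated map by 1. -/

open CombMap in
theorem merge_effect
    {D : Type} [Fintype D] [DecidableEq D]
    (M : CombMap D) (g : ℕ) (hT : IsTriang M g)
    (C : Subcomplex M) (hC : C.Conn) (hD : C.compDual.Conn)
    (e : D) (he : C.MergeEdge e)
    (C' : Subcomplex M) (hadd : IsAddEdge C e C') :
    ¬ C.compDual.Bridge e ∧
    C'.compDual.Conn ∧
    C.numBoundaryFaces = C'.numBoundaryFaces + 1 ∧
    C'.eulerChar = C.eulerChar - 1 ∧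
    C'.assocEulerChar = C.assocEulerChar - 2 ∧
    (∀ g' : ℤ, C.assocHasGenus g' → C'.assocHasGenus (g' + 1)) := by
  classical
  obtain ⟨hch, d, d', hdB, heext, hd'B, hoeext, hnsf⟩ := he
  obtain ⟨heE, hoeE, -, -⟩ := hch
  simp only [Subcomplex.cornerExterior, Set.mem_setOf_eq] at heext hoeext
  obtain ⟨j, hj0, hjlt, hje⟩ := heext
  obtain ⟨j', hj'0, hj'lt, hj'e⟩ := hoeext
  obtain ⟨hF', hE', hV'⟩ := hadd
  obtain ⟨hdE, hdF⟩ := hdB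
  obtain ⟨hd'E, hd'F⟩ := hd'B
  rw [Subcomplex.SameBoundaryFace] at hnsf
  push_neg at hnsf
  obtain ⟨hnsf1, hnsf2⟩ := hnsf
  have heF : e ∉ C.Fs := fun h => heE (fs_subset_es C h)
  have hoeF : M.opp e ∉ C.Fs := fun h => hoeE (fs_subset_es C h)
  have hdd' : d ≠ d' := by
    intro h
    subst h
    exact hnsf1 (self_mem_forb _ _)
  have hEsClosed : ∀ a ∈ C.Es, C.bwalk a ∈ C.Es := fun a ha => bwalk_mem_es C ha
  have hEsInj := bwalk_injOn C
  have hEs'Closed : ∀ a ∈ C'.Es, C'.bwalk a ∈ C'.Es := fun a ha => bwalk_mem_es C' ha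
  have hEs'Inj := bwalk_injOn C'
  have hBclosed : ∀ a ∈ C.Es \ C.Fs, C.bwalk a ∈ C.Es \ C.Fs :=
    fun a ha => ⟨bwalk_mem_es C ha.1, bwalk_not_fs C ha.1 ha.2⟩
  have hmemEs' : ∀ x : D, x ∈ C'.Es ↔ x ∈ C.Es ∨ x = e ∨ x = M.opp e := by
    intro x
    rw [hE']
    simp only [Set.mem_union, Set.mem_insert_iff, Set.mem_singleton_iff]
  have hdE' : d ∈ C'.Es := (hmemEs' d).mpr (Or.inl hdE)
  have heEs' : e ∈ C'.Es := (hmemEs' e).mpr (Or.inr (Or.inl rfl))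
  have hoeEs' : M.opp e ∈ C'.Es := (hmemEs' _).mpr (Or.inr (Or.inr rfl))
  have hOdsubEs : forb C.bwalk d ⊆ C.Es := forb_subset_on hEsClosed hdE
  have hOd'subEs : forb C.bwalk d' ⊆ C.Es := forb_subset_on hEsClosed hd'E
  -- middle darts of corners are not in C'.Es
  have hmid : ∀ (x : D) (i : ℕ), x ∈ C.Es → 0 < i → i < returnSteps M.next C.Es x →
      (x ≠ d ∨ i ≠ j) → (x ≠ d' ∨ i ≠ j') → (⇑M.next)^[i] x ∉ C'.Es := by
    intro x i hx hi0 hilt hxd hxd' hmem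
    rcases (hmemEs' _).mp hmem with h | h | h
    · exact returnSteps_min hi0 hilt h
    · rw [hje] at h
      obtain ⟨h1, h2⟩ := corner_unique C hx hdE hi0 hilt hj0 hjlt h
      rcases hxd with hh | hh
      · exact hh h1
      · exact hh h2
    · rw [hj'e] at h
      obtain ⟨h1, h2⟩ := corner_unique C hx hd'E hi0 hilt hj'0 hj'lt h
      rcases hxd' with hh | hh
      · exact hh h1
      · exact hh h2
  have hR'd : returnSteps M.next C'.Es d = j := by
    apply returnSteps_eq hj0
    · rw [← hje]
      exact heEs'
    · intro i hi0 hij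
      exact hmid d i hdE hi0 (lt_trans hij hjlt) (Or.inr (by omega)) (Or.inl hdd')
  have hbw'd : C'.bwalk d = M.opp e := by
    rw [bwalk_def, hR'd, ← hje]
  have hR'd' : returnSteps M.next C'.Es d' = j' := by
    apply returnSteps_eq hj'0
    · rw [← hj'e]
      exact hoeEs'
    · intro i hi0 hij
      exact hmid d' i hd'E hi0 (lt_trans hij hj'lt) (Or.inl (Ne.symm hdd')) (Or.inr (by omega))
  have hbw'd' : C'.bwalk d' = e := by
    rw [bwalk_def, hR'd', ← hj'e, M.opp_invol]
  obtain ⟨hRd0, hRdmem⟩ := returnSteps_spec (f := M.next) (s := C.Es) hdE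
  obtain ⟨hRd'0, hRd'mem⟩ := returnSteps_spec (f := M.next) (s := C.Es) hd'E
  have hiter_e : ∀ k : ℕ, (⇑M.next)^[k] e = (⇑M.next)^[k + j] d := by
    intro k
    rw [hje]
    exact (Function.iterate_add_apply _ k j d).symm
  have hiter_oe : ∀ k : ℕ, (⇑M.next)^[k] (M.opp e) = (⇑M.next)^[k + j'] d' := by
    intro k
    rw [hj'e]
    exact (Function.iterate_add_apply _ k j' d').symm
  have hR'e : returnSteps M.next C'.Es e = returnSteps M.next C.Es d - j := by
    apply returnSteps_eq (by omega)
    · rw [hiter_e, show returnSteps M.next C.Es d - j + j = returnSteps M.next C.Es d from by omega]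
      exact (hmemEs' _).mpr (Or.inl hRdmem)
    · intro i hi0 hilt
      rw [hiter_e]
      exact hmid d (i + j) hdE (by omega) (by omega) (Or.inr (by omega)) (Or.inl hdd')
  have hbw'e : C'.bwalk e = C.bwalk d := by
    rw [bwalk_def, bwalk_def, hR'e, hiter_e,
      show returnSteps M.next C.Es d - j + j = returnSteps M.next C.Es d from by omega]
  have hR'oe : returnSteps M.next C'.Es (M.opp e) = returnSteps M.next C.Es d' - j' := by
    apply returnSteps_eq (by omega)
    · rw [hiter_oe, show returnSteps M.next C.Es d' - j' + j' = returnSteps M.next C.Es d' from by omega]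
      exact (hmemEs' _).mpr (Or.inl hRd'mem)
    · intro i hi0 hilt
      rw [hiter_oe]
      exact hmid d' (i + j') hd'E (by omega) (by omega) (Or.inl (Ne.symm hdd')) (Or.inr (by omega))
  have hbw'oe : C'.bwalk (M.opp e) = C.bwalk d' := by
    rw [bwalk_def, bwalk_def, hR'oe, hiter_oe,
      show returnSteps M.next C.Es d' - j' + j' = returnSteps M.next C.Es d' from by omega]
  have hbw'same : ∀ x ∈ C.Es, x ≠ d → x ≠ d' → C'.bwalk x = C.bwalk x := by
    intro x hx hxd hxd'
    have hR'x : returnSteps M.next C'.Es x = returnSteps M.next C.Es x := by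
      obtain ⟨h0, hmem⟩ := returnSteps_spec (f := M.next) (s := C.Es) hx
      apply returnSteps_eq h0 ((hmemEs' _).mpr (Or.inl hmem))
      intro i hi0 hilt
      exact hmid x i hx hi0 hilt (Or.inl hxd) (Or.inl hxd')
    rw [bwalk_def, bwalk_def, hR'x]
  have hchain : ∀ (x : D) (n : ℕ),
      (∀ i < n, C.bwalk^[i] x ∈ C.Es ∧ C.bwalk^[i] x ≠ d ∧ C.bwalk^[i] x ≠ d') →
      C'.bwalk^[n] x = C.bwalk^[n] x := by
    intro x n
    induction n with
    | zero => intro _; rfl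
    | succ n ih =>
      intro h
      rw [Function.iterate_succ_apply', Function.iterate_succ_apply',
        ih (fun i hi => h i (Nat.lt_succ_of_lt hi))]
      obtain ⟨h1, h2, h3⟩ := h n (Nat.lt_succ_self n)
      exact hbw'same _ h1 h2 h3
  obtain ⟨p, hp0, hpd, hpmin⟩ := exists_minimal_period_on hEsClosed hEsInj hdE
  obtain ⟨p', hp'0, hp'd, hp'min⟩ := exists_minimal_period_on hEsClosed hEsInj hd'E
  have c1 : C'.bwalk^[1] d = M.opp e := by
    rw [Function.iterate_one]
    exact hbw'd
  have c2 : C'.bwalk^[2] d = C.bwalk d' := by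
    rw [show (2 : ℕ) = 1 + 1 from rfl, Function.iterate_succ_apply', c1, hbw'oe]
  have cmid : C'.bwalk^[p' - 1] (C.bwalk d') = C.bwalk^[p' - 1] (C.bwalk d') := by
    apply hchain
    intro i hi
    rw [← Function.iterate_succ_apply]
    exact ⟨hOd'subEs (iterate_mem_forb _ _ _),
      fun hc => hnsf2 (hc ▸ iterate_mem_forb C.bwalk d' (i + 1)),
      fun hc => hp'min (i + 1) (by omega) (by omega) hc⟩
  have c3 : C'.bwalk^[p' + 1] d = d' := by
    have h1 : C'.bwalk^[p' + 1] d = C'.bwalk^[p' - 1] (C'.bwalk^[2] d) := by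
      rw [← Function.iterate_add_apply]
      congr 1
      omega
    rw [h1, c2, cmid, ← Function.iterate_succ_apply, show Nat.succ (p' - 1) = p' from by omega]
    exact hp'd
  have c4 : C'.bwalk^[p' + 2] d = e := by
    rw [show p' + 2 = (p' + 1) + 1 from rfl, Function.iterate_succ_apply', c3, hbw'd']
  have c5 : C'.bwalk^[p' + 3] d = C.bwalk d := by
    rw [show p' + 3 = (p' + 2) + 1 from rfl, Function.iterate_succ_apply', c4, hbw'e]
  have hOdsub : forb C.bwalk d ⊆ forb C'.bwalk d := by
    rintro y ⟨n, rfl⟩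
    rw [iterate_eq_mod hpd n]
    rcases Nat.eq_zero_or_pos (n % p) with h0 | h0
    · rw [h0, Function.iterate_zero_apply]
      exact self_mem_forb _ _
    · have hlt : n % p < p := Nat.mod_lt n hp0
      have hagree : C'.bwalk^[n % p - 1] (C.bwalk d) = C.bwalk^[n % p - 1] (C.bwalk d) := by
        apply hchain
        intro i hi
        rw [← Function.iterate_succ_apply]
        exact ⟨hOdsubEs (iterate_mem_forb _ _ _),
          fun hc => hpmin (i + 1) (by omega) (by omega) hc,
          fun hc => hnsf1 (hc ▸ iterate_mem_forb C.bwalk d (i + 1))⟩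
      have heq : C.bwalk^[n % p] d = C'.bwalk^[(n % p - 1) + (p' + 3)] d := by
        rw [Function.iterate_add_apply, c5, hagree, ← Function.iterate_succ_apply,
          show Nat.succ (n % p - 1) = n % p from by omega]
      rw [heq]
      exact iterate_mem_forb _ _ _
  have hOd'sub : forb C.bwalk d' ⊆ forb C'.bwalk d := by
    rintro y ⟨n, rfl⟩
    rw [iterate_eq_mod hp'd n]
    rcases Nat.eq_zero_or_pos (n % p') with h0 | h0
    · rw [h0, Function.iterate_zero_apply]
      exact ⟨p' + 1, c3⟩
    · have hlt : n % p' < p' := Nat.mod_lt n hp'0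
      have hagree : C'.bwalk^[n % p' - 1] (C.bwalk d') = C.bwalk^[n % p' - 1] (C.bwalk d') := by
        apply hchain
        intro i hi
        rw [← Function.iterate_succ_apply]
        exact ⟨hOd'subEs (iterate_mem_forb _ _ _),
          fun hc => hnsf2 (hc ▸ iterate_mem_forb C.bwalk d' (i + 1)),
          fun hc => hp'min (i + 1) (by omega) (by omega) hc⟩
      have heq : C.bwalk^[n % p'] d' = C'.bwalk^[(n % p' - 1) + 2] d := by
        rw [Function.iterate_add_apply, c2, hagree, ← Function.iterate_succ_apply,
          show Nat.succ (n % p' - 1) = n % p' from by omega]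
      rw [heq]
      exact iterate_mem_forb _ _ _
  have he_mem : e ∈ forb C'.bwalk d := ⟨p' + 2, c4⟩
  have hoe_mem : M.opp e ∈ forb C'.bwalk d := ⟨1, c1⟩
  set T := (fun x => forb C.bwalk x) '' ((C.Es \ C.Fs) \ (forb C.bwalk d ∪ forb C.bwalk d'))
    with hTdef
  have hstable : ∀ x, x ∈ C.Es → x ∉ forb C.bwalk d → x ∉ forb C.bwalk d' →
      forb C'.bwalk x = forb C.bwalk x := by
    intro x hx hx1 hx2
    apply forb_congr
    intro n
    apply hchain
    intro i _
    refine ⟨iterate_mem_closed hEsClosed hx i, fun hc => ?_, fun hc => ?_⟩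
    · exact hx1 (mem_forb_symm_on hEsClosed hEsInj hx (hc ▸ iterate_mem_forb C.bwalk x i))
    · exact hx2 (mem_forb_symm_on hEsClosed hEsInj hx (hc ▸ iterate_mem_forb C.bwalk x i))
  have hS : (fun x => forb C.bwalk x) '' (C.Es \ C.Fs)
      = insert (forb C.bwalk d) (insert (forb C.bwalk d') T) := by
    apply Set.Subset.antisymm
    · rintro _ ⟨x, hxB, rfl⟩
      by_cases h1 : x ∈ forb C.bwalk d
      · exact Set.mem_insert_iff.mpr (Or.inl (forb_eq_of_mem_on hEsClosed hEsInj hdE h1))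
      by_cases h2 : x ∈ forb C.bwalk d'
      · exact Set.mem_insert_iff.mpr (Or.inr (Set.mem_insert_iff.mpr
          (Or.inl (forb_eq_of_mem_on hEsClosed hEsInj hd'E h2))))
      · refine Set.mem_insert_iff.mpr (Or.inr (Set.mem_insert_iff.mpr (Or.inr ?_)))
        rw [hTdef]
        refine ⟨x, ⟨hxB, ?_⟩, rfl⟩
        intro hc
        rcases hc with hc | hc
        · exact h1 hc
        · exact h2 hc
    · intro y hy
      rcases Set.mem_insert_iff.mp hy with rfl | hy
      · exact ⟨d, ⟨hdE, hdF⟩, rfl⟩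
      rcases Set.mem_insert_iff.mp hy with rfl | hy
      · exact ⟨d', ⟨hd'E, hd'F⟩, rfl⟩
      · rw [hTdef] at hy
        obtain ⟨x, hx, rfl⟩ := hy
        exact ⟨x, hx.1, rfl⟩
  have hB'eq : C'.Es \ C'.Fs = (C.Es \ C.Fs) ∪ {e, M.opp e} := by
    rw [hE', hF']
    ext x
    simp only [Set.mem_diff, Set.mem_union, Set.mem_insert_iff, Set.mem_singleton_iff]
    constructor
    · rintro ⟨h1 | h1, h2⟩
      · exact Or.inl ⟨h1, h2⟩
      · exact Or.inr h1
    · rintro (⟨h1, h2⟩ | h1)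
      · exact ⟨Or.inl h1, h2⟩
      · rcases h1 with rfl | rfl
        · exact ⟨Or.inr (Or.inl rfl), heF⟩
        · exact ⟨Or.inr (Or.inr rfl), hoeF⟩
  have hS' : (fun x => forb C'.bwalk x) '' (C'.Es \ C'.Fs) = insert (forb C'.bwalk d) T := by
    rw [hB'eq]
    apply Set.Subset.antisymm
    · rintro _ ⟨x, hxB, rfl⟩
      rcases hxB with hxB | hxe
      · by_cases h1 : x ∈ forb C.bwalk d
        · exact Set.mem_insert_iff.mpr
            (Or.inl (forb_eq_of_mem_on hEs'Closed hEs'Inj hdE' (hOdsub h1)))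
        by_cases h2 : x ∈ forb C.bwalk d'
        · exact Set.mem_insert_iff.mpr
            (Or.inl (forb_eq_of_mem_on hEs'Closed hEs'Inj hdE' (hOd'sub h2)))
        · refine Set.mem_insert_iff.mpr (Or.inr ?_)
          show forb C'.bwalk x ∈ T
          rw [hstable x hxB.1 h1 h2, hTdef]
          refine ⟨x, ⟨hxB, ?_⟩, rfl⟩
          intro hc
          rcases hc with hc | hc
          · exact h1 hc
          · exact h2 hc
      · rcases hxe with rfl | rfl
        · exact Set.mem_insert_iff.mpr
            (Or.inl (forb_eq_of_mem_on hEs'Closed hEs'Inj hdE' he_mem))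
        · exact Set.mem_insert_iff.mpr
            (Or.inl (forb_eq_of_mem_on hEs'Closed hEs'Inj hdE' hoe_mem))
    · intro y hy
      rcases Set.mem_insert_iff.mp hy with rfl | hy
      · exact ⟨d, Set.mem_union_left _ ⟨hdE, hdF⟩, rfl⟩
      · rw [hTdef] at hy
        obtain ⟨x, hx, rfl⟩ := hy
        have h1 : x ∉ forb C.bwalk d := fun hc => hx.2 (Or.inl hc)
        have h2 : x ∉ forb C.bwalk d' := fun hc => hx.2 (Or.inr hc)
        exact ⟨x, Set.mem_union_left _ hx.1, hstable x hx.1.1 h1 h2⟩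
  have hOdne : forb C.bwalk d ≠ forb C.bwalk d' := by
    intro h
    apply hnsf1
    rw [h]
    exact self_mem_forb _ _
  have hOdT : forb C.bwalk d ∉ T := by
    rw [hTdef]
    rintro ⟨x, hx, hfx⟩
    apply hx.2
    exact Or.inl (by rw [← hfx]; exact self_mem_forb _ _)
  have hOd'T : forb C.bwalk d' ∉ T := by
    rw [hTdef]
    rintro ⟨x, hx, hfx⟩
    apply hx.2
    exact Or.inr (by rw [← hfx]; exact self_mem_forb _ _)
  have hOT : forb C'.bwalk d ∉ T := by
    rw [hTdef]
    rintro ⟨x, hx, hfx⟩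
    have hee : e ∈ forb C.bwalk x := by
      show e ∈ (fun x => forb C.bwalk x) x
      rw [hfx]
      exact he_mem
    exact heE (forb_subset_on hEsClosed hx.1.1 hee)
  have hcount : C.numBoundaryFaces = C'.numBoundaryFaces + 1 := by
    show ((fun x => forb C.bwalk x) '' (C.Es \ C.Fs)).ncard
      = ((fun x => forb C'.bwalk x) '' (C'.Es \ C'.Fs)).ncard + 1
    rw [hS, hS']
    have hni : forb C.bwalk d ∉ insert (forb C.bwalk d') T := by
      rw [Set.mem_insert_iff]
      rintro (h | h)
      · exact hOdne h
      · exact hOdT h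
    rw [Set.ncard_insert_of_notMem hni (Set.toFinite _),
      Set.ncard_insert_of_notMem hOd'T (Set.toFinite _),
      Set.ncard_insert_of_notMem hOT (Set.toFinite _)]
  have horb : numOrbitsIn (⇑M.opp) C'.Es = numOrbitsIn (⇑M.opp) C.Es + 1 := by
    show ((fun x => forb (⇑M.opp) x) '' C'.Es).ncard
      = ((fun x => forb (⇑M.opp) x) '' C.Es).ncard + 1
    have himg : (fun x => forb (⇑M.opp) x) '' C'.Es
        = insert {e, M.opp e} ((fun x => forb (⇑M.opp) x) '' C.Es) := by
      rw [hE', Set.image_union]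
      have h2 : (fun x => forb (⇑M.opp) x) '' {e, M.opp e} = {({e, M.opp e} : Set D)} := by
        rw [Set.image_insert_eq, Set.image_singleton, forb_opp, forb_opp, M.opp_invol]
        rw [Set.pair_comm (M.opp e) e]
        simp
      rw [h2, Set.union_singleton]
    have hnot : ({e, M.opp e} : Set D) ∉ (fun x => forb (⇑M.opp) x) '' C.Es := by
      rintro ⟨x, hx, hfx⟩
      have hfx' : forb (⇑M.opp) x = ({e, M.opp e} : Set D) := hfx
      rw [forb_opp] at hfx'
      have hmem : e ∈ ({x, M.opp x} : Set D) := by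
        rw [hfx']
        exact Set.mem_insert _ _
      rcases hmem with rfl | hmem
      · exact heE hx
      · rw [Set.mem_singleton_iff] at hmem
        apply hoeE
        have hx' : M.opp e = x := by
          rw [hmem, M.opp_invol]
        rw [hx']
        exact hx
    rw [himg, Set.ncard_insert_of_notMem hnot (Set.toFinite _)]
  have hchi : C'.eulerChar = C.eulerChar - 1 := by
    simp only [Subcomplex.eulerChar]
    rw [hV', hF', horb]
    push_cast
    ring
  -- dual connectivity
  have hFsPerm : ∀ x : D, x ∉ C.Fs → M.facePerm x ∉ C.Fs :=
    fun x hx hc => hx (fs_of_facePerm C hc)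
  have hvstep : ∀ x y : D, x ∉ C.Fs → y ∉ C.Fs → y ∈ forb (⇑M.facePerm) x →
      C.compDual.reachAvoiding {e, M.opp e} x y := by
    intro x y hx hy hxy
    exact Relation.ReflTransGen.single (Or.inl ⟨hx, hy, hxy⟩)
  have hestep : ∀ x : D, x ∉ C.Es → x ≠ e → x ≠ M.opp e →
      C.compDual.reachAvoiding {e, M.opp e} x (M.opp x) := by
    intro x hx h1 h2
    refine Relation.ReflTransGen.single (Or.inr ⟨hx, ?_, ?_, rfl⟩)
    · simp only [Set.mem_insert_iff, Set.mem_singleton_iff]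
      push_neg
      exact ⟨h1, h2⟩
    · simp only [Set.mem_insert_iff, Set.mem_singleton_iff]
      push_neg
      constructor
      · intro hc
        apply h2
        have hc' : M.opp x = e := hc
        have := congrArg M.opp hc'
        rwa [M.opp_invol] at this
      · intro hc
        have hc' : M.opp x = M.opp e := hc
        exact h1 (M.opp.injective hc')
  have hsymm : ∀ a b, C.compDual.reachAvoiding {e, M.opp e} a b →
      C.compDual.reachAvoiding {e, M.opp e} b a := by
    have hsym : Symmetric (fun x y =>
        (x ∈ C.compDual.Vs ∧ y ∈ C.compDual.Vs ∧ (dual M).sameVertex x y) ∨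
        (x ∈ C.compDual.Es ∧ x ∉ ({e, M.opp e} : Set D) ∧
          (dual M).opp x ∉ ({e, M.opp e} : Set D) ∧ y = (dual M).opp x)) := by
      intro x y hxy
      rcases hxy with ⟨h1, h2, h3⟩ | ⟨h1, h2, h3, h4⟩
      · refine Or.inl ⟨h2, h1, ?_⟩
        exact mem_forb_symm_on (s := (Set.univ : Set D)) (fun a _ => Set.mem_univ _)
          ((dual M).next.injective.injOn) (Set.mem_univ x) h3
      · subst h4
        refine Or.inr ⟨?_, h3, ?_, ?_⟩
        · exact fun hc => h1 (es_opp_mem C hc)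
        · rw [show (dual M).opp ((dual M).opp x) = x from M.opp_invol x]
          exact h2
        · exact (M.opp_invol x).symm
    exact fun a b h => (@Relation.ReflTransGen.stdSymm _ _ (Std.Symm.mk hsym)).symm a b h
  have hoppclosed : ∀ x ∈ C.Es, M.opp x ∈ C.Es := fun x hx => C.es_closed x hx
  have hWinj : Function.Injective (cwalk M C.Es) := cwalk_injective hoppclosed
  have hP : ∀ n : ℕ, ((cwalk M C.Es)^[n] e ∈ forb C.bwalk d ∨
      ∃ x ∈ forb C.bwalk d, ∃ i, 0 < i ∧ i < returnSteps M.next C.Es x ∧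
        (cwalk M C.Es)^[n] e = (⇑M.next)^[i] x) := by
    intro n
    induction n with
    | zero =>
      exact Or.inr ⟨d, self_mem_forb _ _, j, hj0, hjlt, by simpa using hje⟩
    | succ n ih =>
      rw [Function.iterate_succ_apply']
      rcases ih with h | ⟨x, hx, i, hi0, hilt, hx2⟩
      · have hmemEs : (cwalk M C.Es)^[n] e ∈ C.Es := hOdsubEs h
        by_cases hnh : M.next ((cwalk M C.Es)^[n] e) ∈ C.Es
        · rw [cwalk_of_mem hnh]
          have hr1 : returnSteps M.next C.Es ((cwalk M C.Es)^[n] e) = 1 :=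
            returnSteps_eq one_pos (by simpa using hnh) (fun i h1 h2 => absurd h1 (by omega))
          have hbw : M.opp (M.next ((cwalk M C.Es)^[n] e))
              = C.bwalk ((cwalk M C.Es)^[n] e) := by
            rw [bwalk_def, hr1]
            simp
          rw [hbw]
          exact Or.inl (forb_trans h ⟨1, by simp⟩)
        · rw [cwalk_of_not_mem hnh]
          refine Or.inr ⟨_, h, 1, one_pos, ?_, by simp⟩
          obtain ⟨h0, hmem⟩ := returnSteps_spec (f := M.next) (s := C.Es) hmemEs
          rcases Nat.lt_or_ge 1 (returnSteps M.next C.Es ((cwalk M C.Es)^[n] e)) with hgt | hle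
          · exact hgt
          · exfalso
            have h1 : returnSteps M.next C.Es ((cwalk M C.Es)^[n] e) = 1 := by omega
            rw [h1] at hmem
            simp only [Function.iterate_one] at hmem
            exact hnh hmem
      · have hnexteq : M.next ((cwalk M C.Es)^[n] e) = (⇑M.next)^[i + 1] x := by
          rw [hx2]
          exact (Function.iterate_succ_apply' _ i x).symm
        have hxEs : x ∈ C.Es := hOdsubEs hx
        by_cases hcase : i + 1 = returnSteps M.next C.Es x
        · have hnhEs : M.next ((cwalk M C.Es)^[n] e) ∈ C.Es := by
            rw [hnexteq, hcase]
            exact (returnSteps_spec hxEs).2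
          rw [cwalk_of_mem hnhEs, hnexteq, hcase, ← bwalk_def]
          exact Or.inl (forb_trans hx ⟨1, by simp⟩)
        · have hlt : i + 1 < returnSteps M.next C.Es x := by omega
          have hnhEs : M.next ((cwalk M C.Es)^[n] e) ∉ C.Es := by
            rw [hnexteq]
            exact returnSteps_min (by omega) hlt
          rw [cwalk_of_not_mem hnhEs]
          exact Or.inr ⟨x, hx, i + 1, by omega, hlt, hnexteq⟩
  have hPnotFs : ∀ n, (cwalk M C.Es)^[n] e ∉ C.Fs := by
    intro n
    rcases hP n with h | ⟨x, hx, i, hi0, hilt, hx2⟩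
    · exact (forb_subset_on hBclosed ⟨hdE, hdF⟩ h).2
    · rw [hx2]
      intro hc
      exact (returnSteps_min hi0 hilt) (fs_subset_es C hc)
  have hPne_oe : ∀ n, (cwalk M C.Es)^[n] e ≠ M.opp e := by
    intro n hc
    rcases hP n with h | ⟨x, hx, i, hi0, hilt, hx2⟩
    · exact hoeE (hOdsubEs (hc ▸ h))
    · have hkey : (⇑M.next)^[i] x = (⇑M.next)^[j'] d' := by
        rw [← hx2, hc, hj'e]
      obtain ⟨h1, -⟩ := corner_unique C (hOdsubEs hx) hd'E hi0 hilt hj'0 hj'lt hkey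
      rw [h1] at hx
      exact hnsf1 hx
  have hdphi_mem : ∀ h : D, h ∈ C.Es → dphi M C h = h := by
    intro h hh
    simp [dphi, hh]
  have hdphi_not : ∀ h : D, h ∉ C.Es → dphi M C h = M.opp h := by
    intro h hh
    simp [dphi, hh]
  have hdphiW : ∀ h : D, dphi M C (cwalk M C.Es h) = M.opp (M.next h) := by
    intro h
    by_cases hnh : M.next h ∈ C.Es
    · rw [cwalk_of_mem hnh, hdphi_mem _ (hoppclosed _ hnh)]
    · rw [cwalk_of_not_mem hnh, hdphi_not _ hnh]
  have hstep1 : ∀ n : ℕ, (cwalk M C.Es)^[n] e ≠ e →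
      C.compDual.reachAvoiding {e, M.opp e} (dphi M C ((cwalk M C.Es)^[n] e))
        (dphi M C ((cwalk M C.Es)^[n + 1] e)) := by
    intro n hne
    have hne' := hPne_oe n
    have hnf := hPnotFs n
    set h := (cwalk M C.Es)^[n] e with hh
    have htarget : dphi M C ((cwalk M C.Es)^[n + 1] e) = M.opp (M.next h) := by
      rw [Function.iterate_succ_apply', ← hh, hdphiW]
    rw [htarget]
    have hface_notfs : M.opp (M.next h) ∉ C.Fs := hFsPerm h hnf
    have hface_mem : M.opp (M.next h) ∈ forb (⇑M.facePerm) h := ⟨1, by simp [facePerm_apply]⟩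
    by_cases hhEs : h ∈ C.Es
    · rw [hdphi_mem _ hhEs]
      exact hvstep h _ hnf hface_notfs hface_mem
    · rw [hdphi_not _ hhEs]
      have hstep_a : C.compDual.reachAvoiding {e, M.opp e} (M.opp h) h := by
        have h1 : M.opp h ≠ e := by
          intro hc
          apply hne'
          have := congrArg M.opp hc
          rwa [M.opp_invol] at this
        have h2 : M.opp h ≠ M.opp e := fun hc => hne (M.opp.injective hc)
        have hst := hestep (M.opp h) (es_opp_not_mem C hhEs) h1 h2
        rwa [M.opp_invol] at hst
      exact Relation.ReflTransGen.trans hstep_a (hvstep h _ hnf hface_notfs hface_mem)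
  obtain ⟨L, hL0, hLe, hLmin⟩ := exists_minimal_period_on (f := cwalk M C.Es)
    (s := (Set.univ : Set D)) (fun a _ => Set.mem_univ _) hWinj.injOn (Set.mem_univ e)
  have hchainQ : ∀ i : ℕ, 1 ≤ i → i ≤ L →
      C.compDual.reachAvoiding {e, M.opp e} (dphi M C ((cwalk M C.Es)^[1] e))
        (dphi M C ((cwalk M C.Es)^[i] e)) := by
    intro i
    induction i with
    | zero => intro h1 _; exact absurd h1 (by omega)
    | succ i ih =>
      intro h1 h2
      rcases Nat.eq_or_lt_of_le h1 with heq | hlt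
      · rw [← heq]
        exact Relation.ReflTransGen.refl
      · have hprev := ih (by omega) (by omega)
        refine Relation.ReflTransGen.trans hprev (hstep1 i ?_)
        exact hLmin i (by omega) (by omega)
  have hQ : C.compDual.reachAvoiding {e, M.opp e} e (M.opp e) := by
    have hfirst : C.compDual.reachAvoiding {e, M.opp e} e
        (dphi M C ((cwalk M C.Es)^[1] e)) := by
      have h1 : dphi M C ((cwalk M C.Es)^[1] e) = M.opp (M.next e) := by
        rw [Function.iterate_one, hdphiW]
      rw [h1]
      exact hvstep e _ heF (hFsPerm e heF) ⟨1, by simp [facePerm_apply]⟩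
    have hlast : dphi M C ((cwalk M C.Es)^[L] e) = M.opp e := by
      rw [hLe, hdphi_not _ heE]
    have hch := hchainQ L (by omega) le_rfl
    rw [hlast] at hch
    exact Relation.ReflTransGen.trans hfirst hch
  have hupg : ∀ a b, C.compDual.reachAvoiding ∅ a b →
      C.compDual.reachAvoiding {e, M.opp e} a b := by
    intro a b hab
    induction hab with
    | refl => exact Relation.ReflTransGen.refl
    | @tail x y hxy hstep ih =>
      rcases hstep with ⟨h1, h2, h3⟩ | ⟨h1, -, -, h4⟩
      · exact ih.tail (Or.inl ⟨h1, h2, h3⟩)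
      · subst h4
        by_cases hc1 : x = e
        · subst hc1
          exact Relation.ReflTransGen.trans ih hQ
        by_cases hc2 : x = M.opp e
        · subst hc2
          rw [show (dual M).opp (M.opp e) = e from M.opp_invol e]
          exact Relation.ReflTransGen.trans ih (hsymm _ _ hQ)
        · refine ih.tail (Or.inr ⟨h1, ?_, ?_, rfl⟩)
          · simp only [Set.mem_insert_iff, Set.mem_singleton_iff]
            push_neg
            exact ⟨hc1, hc2⟩
          · simp only [Set.mem_insert_iff, Set.mem_singleton_iff]
            push_neg
            constructor
            · intro hc
              apply hc2
              have hc' : M.opp x = e := hc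
              have := congrArg M.opp hc'
              rwa [M.opp_invol] at this
            · intro hc
              have hc' : M.opp x = M.opp e := hc
              exact hc1 (M.opp.injective hc')
  have h5 : C'.assocEulerChar = C.assocEulerChar - 2 := by
    simp only [Subcomplex.assocEulerChar]
    have hcast : (C.numBoundaryFaces : ℤ) = (C'.numBoundaryFaces : ℤ) + 1 := by
      exact_mod_cast congrArg (Nat.cast (R := ℤ)) hcount
    rw [hchi, hcast]
    ring
  refine ⟨?_, ?_, hcount, hchi, h5, ?_⟩
  · rintro ⟨-, hn⟩
    exact hn (fun a ha b hb => hupg a b (hD a ha b hb))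
  · intro a ha b hb
    have hVs : C'.compDual.Vs = C.compDual.Vs := by
      show C'.Fsᶜ = C.Fsᶜ
      rw [hF']
    have ha' : a ∈ C.compDual.Vs := by rw [← hVs]; exact ha
    have hb' : b ∈ C.compDual.Vs := by rw [← hVs]; exact hb
    have hpath := hupg a b (hD a ha' b hb')
    refine Relation.ReflTransGen.mono ?_ a b hpath
    intro x y hxy
    rcases hxy with ⟨h1, h2, h3⟩ | ⟨h1, h2, h3, h4⟩
    · refine Or.inl ⟨?_, ?_, h3⟩
      · rw [hVs]; exact h1
      · rw [hVs]; exact h2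
    · refine Or.inr ⟨?_, Set.notMem_empty x, Set.notMem_empty _, h4⟩
      show x ∉ C'.Es
      rw [hE']
      intro hc
      rcases hc with hc | hc
      · exact h1 hc
      · exact h2 hc
  · intro g' hg
    show C'.assocEulerChar = 2 - 2 * (g' + 1)
    have hg' : C.assocEulerChar = 2 - 2 * g' := hg
    rw [h5, hg']
    ring
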